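/- (Special case: two unconnected stable systems are separable at steady state.) Let J denote the 2×2 real matrix [[0,1],[-1,0]]. For k = 1, 2, let A_k be a real 2×2 Hurwitz matrix, B_k a real 2×m_k matrix, S_{wk} a real symmetric m_k×m_k matrix, and T_{wk} a Hermitian m_k×m_k complex matrix with S_{wk} + T_{wk} positive semidefinite, such that A_k·J + J·A_kᵀ − i·B_k·T_{wk}·B_kᵀ = 0. If the real symmetric 4×4 matrix P satisfies diag(A₁,A₂)·P + P·diag(A₁,A₂)ᵀ + diag(B₁S_{w1}B₁ᵀ, B₂S_{w2}B₂ᵀ) = 0, then P + i·diag(J, −J) is positive semidefinite. In particular, two independent, unconnected stable Gaussian systems, even if initially entangled, become separable at steady state. -/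

import Mathlib

open Matrix
open scoped ComplexOrder

/-- A complex square matrix is Hurwitz if every eigenvalue (i.e. every element of its
spectrum) has strictly negative real part. -/
def Matrix.IsHurwitz {k : Type*} [Fintype k] [DecidableEq k] (A : Matrix k k ℂ) : Prop :=
  ∀ μ ∈ spectrum ℂ A, μ.re < 0

/-- The complexification of a real matrix. -/
def Matrix.cplx {k l : Type*} (A : Matrix k l ℝ) : Matrix k l ℂ :=
  A.map Complex.ofReal

/-- The 2×2 symplectic matrix `J = [[0,1],[-1,0]]`. -/
def Jmat : Matrix (Fin 2) (Fin 2) ℝ := !![0, 1; -1, 0]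

namespace SepAux
open Complex

lemma cplx_mul {k l m : Type*} [Fintype l] (A : Matrix k l ℝ) (B : Matrix l m ℝ) :
    (A * B).cplx = A.cplx * B.cplx :=
  Matrix.map_mul (L := A) (M := B) (f := Complex.ofRealHom)

lemma cplx_add {k l : Type*} (A B : Matrix k l ℝ) : (A + B).cplx = A.cplx + B.cplx := by
  ext i j; simp [Matrix.cplx]

lemma cplx_neg {k l : Type*} (A : Matrix k l ℝ) : (-A).cplx = -A.cplx := by
  ext i j; simp [Matrix.cplx]

lemma cplx_zero {k l : Type*} : (0 : Matrix k l ℝ).cplx = 0 := by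
  ext i j; simp [Matrix.cplx]

lemma cplx_transpose {k l : Type*} (A : Matrix k l ℝ) : Aᵀ.cplx = A.cplxᵀ := by
  ext i j; simp [Matrix.cplx]

lemma cplx_conjTranspose {k l : Type*} (A : Matrix k l ℝ) : A.cplxᴴ = A.cplxᵀ := by
  ext i j; simp [Matrix.cplx, Matrix.conjTranspose_apply, Complex.conj_ofReal]

lemma cplx_conj {k l : Type*} (A : Matrix k l ℝ) :
    A.cplx.map (starRingEnd ℂ) = A.cplx := by
  ext i j; simp [Matrix.cplx, Complex.conj_ofReal]

lemma cplx_fromBlocks {k l k' l' : Type*} (A : Matrix k l ℝ) (B : Matrix k l' ℝ)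
    (C : Matrix k' l ℝ) (D : Matrix k' l' ℝ) :
    (Matrix.fromBlocks A B C D).cplx = Matrix.fromBlocks A.cplx B.cplx C.cplx D.cplx := by
  ext i j
  rcases i with i | i <;> rcases j with j | j <;> simp [Matrix.cplx, Matrix.fromBlocks]

lemma map_conj_smul {k l : Type*} (c : ℂ) (X : Matrix k l ℂ) :
    (c • X).map (starRingEnd ℂ) = (starRingEnd ℂ) c • X.map (starRingEnd ℂ) := by
  ext i j; simp

lemma psd_add {n : Type*} [Fintype n] {M N : Matrix n n ℂ}
    (hM : M.PosSemidef) (hN : N.PosSemidef) : (M + N).PosSemidef := by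
  refine .of_dotProduct_mulVec_nonneg (hM.1.add hN.1) fun x => ?_
  rw [add_mulVec, dotProduct_add]
  exact add_nonneg (hM.dotProduct_mulVec_nonneg x) (hN.dotProduct_mulVec_nonneg x)

lemma psd_smul_real {n : Type*} [Fintype n] {M : Matrix n n ℂ}
    (hM : M.PosSemidef) {c : ℝ} (hc : 0 ≤ c) : ((c : ℂ) • M).PosSemidef := by
  refine .of_dotProduct_mulVec_nonneg ?_ fun x => ?_
  · unfold Matrix.IsHermitian
    rw [conjTranspose_smul, hM.1.eq]
    congr 1
    simp [Complex.conj_ofReal]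
  · rw [smul_mulVec, dotProduct_smul, smul_eq_mul]
    exact mul_nonneg (by exact_mod_cast hc) (hM.dotProduct_mulVec_nonneg x)

lemma psd_fromBlocks {n m : Type*} [Fintype n] [Fintype m]
    {X : Matrix n n ℂ} {Y : Matrix m m ℂ} (hX : X.PosSemidef) (hY : Y.PosSemidef) :
    (fromBlocks X 0 0 Y).PosSemidef := by
  refine .of_dotProduct_mulVec_nonneg ?_ fun x => ?_
  · unfold Matrix.IsHermitian
    rw [fromBlocks_conjTranspose, hX.1.eq, hY.1.eq]
    simp
  · have hx : star x ⬝ᵥ (fromBlocks X 0 0 Y) *ᵥ x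
        = star (x ∘ Sum.inl) ⬝ᵥ X *ᵥ (x ∘ Sum.inl)
          + star (x ∘ Sum.inr) ⬝ᵥ Y *ᵥ (x ∘ Sum.inr) := by
      simp [fromBlocks_mulVec, dotProduct, Fintype.sum_sum_type, Function.comp]
    rw [hx]
    exact add_nonneg (hX.dotProduct_mulVec_nonneg _) (hY.dotProduct_mulVec_nonneg _)

lemma mem_spec (A : Matrix (Fin 2) (Fin 2) ℝ) (μ : ℂ)
    (h : μ ^ 2 - (A.trace : ℂ) * μ + (A.det : ℂ) = 0) : μ ∈ spectrum ℂ A.cplx := by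
  rw [spectrum.mem_iff]
  intro hu
  rw [Matrix.isUnit_iff_isUnit_det, isUnit_iff_ne_zero] at hu
  apply hu
  rw [Algebra.algebraMap_eq_smul_one]
  rw [Matrix.det_fin_two]
  simp only [Matrix.sub_apply, Matrix.smul_apply, Matrix.one_apply, Matrix.cplx,
    Matrix.map_apply, smul_eq_mul]
  rw [Matrix.trace_fin_two, Matrix.det_fin_two] at h
  push_cast at h ⊢
  ring_nf
  ring_nf at h
  linear_combination h

lemma hurwitz_td (A : Matrix (Fin 2) (Fin 2) ℝ) (hA : A.cplx.IsHurwitz) :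
    A.trace < 0 ∧ 0 < A.det := by
  set t := A.trace with htdef
  set d := A.det with hddef
  by_cases hdisc : 0 ≤ t ^ 2 - 4 * d
  · set s := Real.sqrt (t ^ 2 - 4 * d) with hsdef
    have hs : s ^ 2 = t ^ 2 - 4 * d := Real.sq_sqrt hdisc
    have h1 : (((t + s) / 2 : ℝ) : ℂ) ∈ spectrum ℂ A.cplx := by
      apply mem_spec
      have : ((t + s) / 2 : ℝ) ^ 2 - t * ((t + s) / 2) + d = 0 := by nlinarith [hs]
      have h := congrArg Complex.ofReal this
      push_cast at h ⊢
      rw [← htdef, ← hddef]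
      linear_combination h
    have h2 : (((t - s) / 2 : ℝ) : ℂ) ∈ spectrum ℂ A.cplx := by
      apply mem_spec
      have : ((t - s) / 2 : ℝ) ^ 2 - t * ((t - s) / 2) + d = 0 := by nlinarith [hs]
      have h := congrArg Complex.ofReal this
      push_cast at h ⊢
      rw [← htdef, ← hddef]
      linear_combination h
    have r1 := hA _ h1
    have r2 := hA _ h2
    simp only [Complex.ofReal_re] at r1 r2
    have hsnn : 0 ≤ s := Real.sqrt_nonneg _
    constructor <;> nlinarith [hs]
  · push_neg at hdisc
    set s := Real.sqrt (4 * d - t ^ 2) with hsdef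
    have hs : s ^ 2 = 4 * d - t ^ 2 := Real.sq_sqrt (by linarith)
    have h1 : ((t : ℂ) + Complex.I * s) / 2 ∈ spectrum ℂ A.cplx := by
      apply mem_spec
      have hs' : ((s : ℂ)) ^ 2 = 4 * (d : ℂ) - (t : ℂ) ^ 2 := by
        exact_mod_cast congrArg Complex.ofReal hs
      linear_combination (s : ℂ) ^ 2 / 4 * Complex.I_sq - (1 / 4 : ℂ) * hs'
    have r1 := hA _ h1
    have : (((t : ℂ) + Complex.I * s) / 2).re = t / 2 := by
      simp [Complex.add_re, Complex.div_re]
    rw [this] at r1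
    have ht : t < 0 := by linarith
    exact ⟨ht, by nlinarith [hs, sq_nonneg s, sq_nonneg t]⟩

lemma ch2 {R : Type*} [CommRing R] (M : Matrix (Fin 2) (Fin 2) R) :
    M * M = M.trace • M - M.det • 1 := by
  ext i j
  fin_cases i <;> fin_cases j <;>
    simp [Matrix.mul_apply, Fin.sum_univ_two, Matrix.trace_fin_two, Matrix.det_fin_two,
      Matrix.one_apply] <;> ring

lemma sylvester (A₁ A₂ X : Matrix (Fin 2) (Fin 2) ℝ)
    (ht₁ : A₁.trace < 0) (hd₁ : 0 < A₁.det) (ht₂ : A₂.trace < 0) (hd₂ : 0 < A₂.det)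
    (h : A₁ * X + X * A₂ᵀ = 0) : X = 0 := by
  set t₁ := A₁.trace with ht₁d; set d₁ := A₁.det with hd₁d
  set t₂ := A₂.trace with ht₂d; set d₂ := A₂.det with hd₂d
  set s := t₁ + t₂ with hsdef
  set α := d₁ - d₂ with hαdef
  have hneg : X * A₂ᵀ = -(A₁ * X) := by linear_combination (norm := module) h
  have hneg' : A₁ * X = -(X * A₂ᵀ) := by linear_combination (norm := module) h
  have hch1 : A₁ * (A₁ * X) = t₁ • (A₁ * X) - d₁ • X := by
    rw [← Matrix.mul_assoc, ch2 A₁, Matrix.sub_mul, Matrix.smul_mul, Matrix.smul_mul,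
      Matrix.one_mul]
  have hch2 : (X * A₂ᵀ) * A₂ᵀ = t₂ • (X * A₂ᵀ) - d₂ • X := by
    rw [Matrix.mul_assoc, ch2 A₂ᵀ, Matrix.trace_transpose, Matrix.det_transpose,
      Matrix.mul_sub, Matrix.mul_smul, Matrix.mul_smul, Matrix.mul_one]
  have hEq : A₁ * (A₁ * X) = (X * A₂ᵀ) * A₂ᵀ := by
    calc A₁ * (A₁ * X) = -(A₁ * (X * A₂ᵀ)) := by rw [hneg, Matrix.mul_neg, neg_neg]
    _ = -((A₁ * X) * A₂ᵀ) := by rw [Matrix.mul_assoc]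
    _ = (X * A₂ᵀ) * A₂ᵀ := by rw [hneg', Matrix.neg_mul, neg_neg]
  have key3 : s • (A₁ * X) = α • X := by
    linear_combination (norm := module) (-1 : ℝ) • hch1 + hch2 + hEq + t₂ • hneg
  have e5 : s • (A₁ * (A₁ * X)) = α • (A₁ * X) := by
    have := congrArg (fun M => A₁ * M) key3
    simpa only [Matrix.mul_smul] using this
  have e6 : s • ((A₁ * X) * A₂ᵀ) = α • (X * A₂ᵀ) := by
    have := congrArg (fun M => M * A₂ᵀ) key3
    simpa only [Matrix.smul_mul] using this
  have e4 : (A₁ * X) * A₂ᵀ = -((X * A₂ᵀ) * A₂ᵀ) := by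
    rw [hneg', Matrix.neg_mul]
  have G6 : (α ^ 2 - s * t₁ * α + s ^ 2 * d₁) • X = 0 := by
    linear_combination (norm := module)
      (s ^ 2 : ℝ) • hch1 - s • e5 - (α - s * t₁) • key3
  have G7 : (α ^ 2 + s * t₂ * α + s ^ 2 * d₂) • X = 0 := by
    linear_combination (norm := module)
      s • e6 - (s ^ 2 : ℝ) • e4 + (s ^ 2 : ℝ) • hch2 + (s * α + s ^ 2 * t₂) • hneg
      - (α + s * t₂) • key3
  have hst₁ : 0 < s * t₁ := by nlinarith
  have hst₂ : 0 < s * t₂ := by nlinarith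
  have hs2 : 0 < s ^ 2 := by nlinarith
  rcases le_or_gt 0 α with hα | hα
  · have hpos : α ^ 2 + s * t₂ * α + s ^ 2 * d₂ ≠ 0 := by nlinarith
    rcases smul_eq_zero.mp G7 with hc | hc
    · exact absurd hc hpos
    · exact hc
  · have hpos : α ^ 2 - s * t₁ * α + s ^ 2 * d₁ ≠ 0 := by nlinarith
    rcases smul_eq_zero.mp G6 with hc | hc
    · exact absurd hc hpos
    · exact hc

lemma lyap_key (A : Matrix (Fin 2) (Fin 2) ℝ)
    {D Q : Matrix (Fin 2) (Fin 2) ℂ}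
    (hQ : A.cplx * Q + Q * A.cplxᵀ + D = 0) :
    (-(2 * A.trace * A.det) : ℂ) • Q
      = (A.det : ℂ) • D + (A.cplx - (A.trace : ℂ) • 1) * D * (A.cplx - (A.trace : ℂ) • 1)ᴴ := by
  have e : ∀ a b : Fin 2, (A a 0 : ℂ) * Q 0 b + (A a 1 : ℂ) * Q 1 b
      + (Q a 0 * (A b 0 : ℂ) + Q a 1 * (A b 1 : ℂ)) + D a b = 0 := by
    intro a b
    have h := congrFun (congrFun hQ a) b
    simp only [Matrix.add_apply, Matrix.mul_apply, Fin.sum_univ_two, Matrix.cplx,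
      Matrix.map_apply, Matrix.transpose_apply, Matrix.zero_apply] at h
    linear_combination h
  have tt_def : (A.trace : ℂ) = (A 0 0 : ℂ) + (A 1 1 : ℂ) := by
    rw [Matrix.trace_fin_two]; push_cast; ring
  have dd_def : (A.det : ℂ) = (A 0 0 : ℂ) * (A 1 1 : ℂ) - (A 0 1 : ℂ) * (A 1 0 : ℂ) := by
    rw [Matrix.det_fin_two]; push_cast; ring
  ext i j
  fin_cases i <;> fin_cases j <;>
    (simp [Matrix.mul_apply, Fin.sum_univ_two, Matrix.cplx, Matrix.map_apply,
      Matrix.one_apply, Matrix.smul_apply, Matrix.sub_apply, Matrix.add_apply,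
      Matrix.conjTranspose_apply, RCLike.star_def, Complex.conj_ofReal, smul_eq_mul];
     rw [tt_def, dd_def])
  · linear_combination (A 0 0 : ℂ) * (((A 0 0 : ℂ) + (A 1 1 : ℂ)) * e 0 0 - (A 0 0 : ℂ) * e 0 0 - (A 0 1 : ℂ) * e 1 0 + (A 0 0 : ℂ) * e 0 0 + (A 0 1 : ℂ) * e 0 1) + (A 0 1 : ℂ) * (((A 0 0 : ℂ) + (A 1 1 : ℂ)) * e 0 1 - (A 0 0 : ℂ) * e 0 1 - (A 0 1 : ℂ) * e 1 1 + (A 1 0 : ℂ) * e 0 0 + (A 1 1 : ℂ) * e 0 1) - ((A 0 0 : ℂ) + (A 1 1 : ℂ)) * (((A 0 0 : ℂ) + (A 1 1 : ℂ)) * e 0 0 - (A 0 0 : ℂ) * e 0 0 - (A 0 1 : ℂ) * e 1 0 + (A 0 0 : ℂ) * e 0 0 + (A 0 1 : ℂ) * e 0 1)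
  · linear_combination (A 1 0 : ℂ) * (((A 0 0 : ℂ) + (A 1 1 : ℂ)) * e 0 0 - (A 0 0 : ℂ) * e 0 0 - (A 0 1 : ℂ) * e 1 0 + (A 0 0 : ℂ) * e 0 0 + (A 0 1 : ℂ) * e 0 1) + (A 1 1 : ℂ) * (((A 0 0 : ℂ) + (A 1 1 : ℂ)) * e 0 1 - (A 0 0 : ℂ) * e 0 1 - (A 0 1 : ℂ) * e 1 1 + (A 1 0 : ℂ) * e 0 0 + (A 1 1 : ℂ) * e 0 1) - ((A 0 0 : ℂ) + (A 1 1 : ℂ)) * (((A 0 0 : ℂ) + (A 1 1 : ℂ)) * e 0 1 - (A 0 0 : ℂ) * e 0 1 - (A 0 1 : ℂ) * e 1 1 + (A 1 0 : ℂ) * e 0 0 + (A 1 1 : ℂ) * e 0 1)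
  · linear_combination (A 0 0 : ℂ) * (((A 0 0 : ℂ) + (A 1 1 : ℂ)) * e 1 0 - (A 1 0 : ℂ) * e 0 0 - (A 1 1 : ℂ) * e 1 0 + (A 0 0 : ℂ) * e 1 0 + (A 0 1 : ℂ) * e 1 1) + (A 0 1 : ℂ) * (((A 0 0 : ℂ) + (A 1 1 : ℂ)) * e 1 1 - (A 1 0 : ℂ) * e 0 1 - (A 1 1 : ℂ) * e 1 1 + (A 1 0 : ℂ) * e 1 0 + (A 1 1 : ℂ) * e 1 1) - ((A 0 0 : ℂ) + (A 1 1 : ℂ)) * (((A 0 0 : ℂ) + (A 1 1 : ℂ)) * e 1 0 - (A 1 0 : ℂ) * e 0 0 - (A 1 1 : ℂ) * e 1 0 + (A 0 0 : ℂ) * e 1 0 + (A 0 1 : ℂ) * e 1 1)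
  · linear_combination (A 1 0 : ℂ) * (((A 0 0 : ℂ) + (A 1 1 : ℂ)) * e 1 0 - (A 1 0 : ℂ) * e 0 0 - (A 1 1 : ℂ) * e 1 0 + (A 0 0 : ℂ) * e 1 0 + (A 0 1 : ℂ) * e 1 1) + (A 1 1 : ℂ) * (((A 0 0 : ℂ) + (A 1 1 : ℂ)) * e 1 1 - (A 1 0 : ℂ) * e 0 1 - (A 1 1 : ℂ) * e 1 1 + (A 1 0 : ℂ) * e 1 0 + (A 1 1 : ℂ) * e 1 1) - ((A 0 0 : ℂ) + (A 1 1 : ℂ)) * (((A 0 0 : ℂ) + (A 1 1 : ℂ)) * e 1 1 - (A 1 0 : ℂ) * e 0 1 - (A 1 1 : ℂ) * e 1 1 + (A 1 0 : ℂ) * e 1 0 + (A 1 1 : ℂ) * e 1 1)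

lemma lyap (A : Matrix (Fin 2) (Fin 2) ℝ) (ht : A.trace < 0) (hd : 0 < A.det)
    {D Q : Matrix (Fin 2) (Fin 2) ℂ} (hD : D.PosSemidef)
    (hQ : A.cplx * Q + Q * A.cplxᵀ + D = 0) : Q.PosSemidef := by
  have key := lyap_key A hQ
  have hc : (0 : ℝ) < -(2 * A.trace * A.det) := by nlinarith
  have hQeq : Q = (((-(2 * A.trace * A.det))⁻¹ : ℝ) : ℂ) •
      ((A.det : ℂ) • D + (A.cplx - (A.trace : ℂ) • 1) * D * (A.cplx - (A.trace : ℂ) • 1)ᴴ) := by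
    rw [← key, smul_smul]
    rw [show (((-(2 * A.trace * A.det))⁻¹ : ℝ) : ℂ) * (-(2 * A.trace * A.det) : ℂ) = 1 by
      push_cast
      exact inv_mul_cancel₀ (by have h := Complex.ofReal_ne_zero.mpr hc.ne'; push_cast at h; exact h)]
    rw [one_smul]
  rw [hQeq]
  exact psd_smul_real
    (psd_add (psd_smul_real hD hd.le) (hD.mul_mul_conjTranspose_same _))
    (le_of_lt (inv_pos.mpr hc))

end SepAux

open SepAux

/-- **Two independent, unconnected stable Gaussian systems are separable at steady state.**
For `k = 1, 2` let `A_k` be real `2×2` Hurwitz, `S_{wk}` real symmetric, `T_{wk}` Hermitian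
with `S_{wk} + T_{wk} ⪰ 0` and `A_k J + J A_kᵀ - i B_k T_{wk} B_kᵀ = 0`.  If the real
symmetric `4×4` matrix `P` satisfies the steady-state Lyapunov equation of the uncoupled
system `diag(A₁,A₂)`, then `P + i·diag(J,-J) ⪰ 0`, i.e. the steady state is separable even
if the initial state was entangled. -/
theorem unconnected_systems_steady_state_separable {m₁ m₂ : ℕ}
    (A₁ : Matrix (Fin 2) (Fin 2) ℝ) (A₂ : Matrix (Fin 2) (Fin 2) ℝ)
    (B₁ : Matrix (Fin 2) (Fin m₁) ℝ) (B₂ : Matrix (Fin 2) (Fin m₂) ℝ)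
    (Sw₁ : Matrix (Fin m₁) (Fin m₁) ℝ) (Sw₂ : Matrix (Fin m₂) (Fin m₂) ℝ)
    (Tw₁ : Matrix (Fin m₁) (Fin m₁) ℂ) (Tw₂ : Matrix (Fin m₂) (Fin m₂) ℂ)
    (P : Matrix (Fin 2 ⊕ Fin 2) (Fin 2 ⊕ Fin 2) ℝ)
    (hA₁ : A₁.cplx.IsHurwitz) (hA₂ : A₂.cplx.IsHurwitz)
    (hSw₁ : Sw₁.IsSymm) (hSw₂ : Sw₂.IsSymm)
    (hTw₁ : Tw₁.IsHermitian) (hTw₂ : Tw₂.IsHermitian)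
    (hFw₁ : (Sw₁.cplx + Tw₁).PosSemidef) (hFw₂ : (Sw₂.cplx + Tw₂).PosSemidef)
    (hComm₁ : A₁.cplx * Jmat.cplx + Jmat.cplx * A₁.cplxᵀ
        - Complex.I • (B₁.cplx * Tw₁ * B₁.cplxᵀ) = 0)
    (hComm₂ : A₂.cplx * Jmat.cplx + Jmat.cplx * A₂.cplxᵀ
        - Complex.I • (B₂.cplx * Tw₂ * B₂.cplxᵀ) = 0)
    (hP : P.IsSymm)
    (hLyap : fromBlocks A₁ 0 0 A₂ * P + P * (fromBlocks A₁ 0 0 A₂)ᵀ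
        + fromBlocks (B₁ * Sw₁ * B₁ᵀ) 0 0 (B₂ * Sw₂ * B₂ᵀ) = 0) :
    (P.cplx + Complex.I • (fromBlocks Jmat 0 0 (-Jmat)).cplx).PosSemidef := by
  obtain ⟨ht₁, hd₁⟩ := hurwitz_td A₁ hA₁
  obtain ⟨ht₂, hd₂⟩ := hurwitz_td A₂ hA₂
  -- split P into blocks
  set P11 := P.toBlocks₁₁ with hP11
  set P12 := P.toBlocks₁₂ with hP12
  set P21 := P.toBlocks₂₁ with hP21
  set P22 := P.toBlocks₂₂ with hP22
  have hPb : P = fromBlocks P11 P12 P21 P22 := (fromBlocks_toBlocks P).symm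
  rw [hPb, fromBlocks_transpose, fromBlocks_multiply, fromBlocks_multiply] at hLyap
  simp only [Matrix.transpose_zero, Matrix.zero_mul, Matrix.mul_zero, add_zero,
    zero_add] at hLyap
  rw [fromBlocks_add, fromBlocks_add] at hLyap
  simp only [add_zero, zero_add] at hLyap
  have hLb := fromBlocks_inj.mp (hLyap.trans (fromBlocks_zero).symm)
  obtain ⟨eq11, eq12, eq21, eq22⟩ := hLb
  try simp only [add_zero] at eq12 eq21
  -- off-diagonal blocks vanish
  have h12 : P12 = 0 := sylvester A₁ A₂ P12 ht₁ hd₁ ht₂ hd₂ eq12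
  have h21 : P21 = 0 := sylvester A₂ A₁ P21 ht₂ hd₂ ht₁ hd₁ eq21
  -- complexified block equations
  have hreal1 : A₁.cplx * P11.cplx + P11.cplx * A₁.cplxᵀ
      + B₁.cplx * Sw₁.cplx * B₁.cplxᵀ = 0 := by
    have := congrArg Matrix.cplx eq11
    simpa only [cplx_add, cplx_mul, cplx_transpose, cplx_zero] using this
  have hreal2 : A₂.cplx * P22.cplx + P22.cplx * A₂.cplxᵀ
      + B₂.cplx * Sw₂.cplx * B₂.cplxᵀ = 0 := by
    have := congrArg Matrix.cplx eq22
    simpa only [cplx_add, cplx_mul, cplx_transpose, cplx_zero] using this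
  have hC1 : A₁.cplx * Jmat.cplx + Jmat.cplx * A₁.cplxᵀ
      = Complex.I • (B₁.cplx * Tw₁ * B₁.cplxᵀ) := by
    linear_combination (norm := module) hComm₁
  have hC2 : A₂.cplx * Jmat.cplx + Jmat.cplx * A₂.cplxᵀ
      = Complex.I • (B₂.cplx * Tw₂ * B₂.cplxᵀ) := by
    linear_combination (norm := module) hComm₂
  have hI1 : Complex.I • (A₁.cplx * Jmat.cplx) + Complex.I • (Jmat.cplx * A₁.cplxᵀ)
      = -(B₁.cplx * Tw₁ * B₁.cplxᵀ) := by
    rw [← smul_add, hC1, smul_smul, Complex.I_mul_I, neg_one_smul]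
  have hI2 : Complex.I • (A₂.cplx * Jmat.cplx) + Complex.I • (Jmat.cplx * A₂.cplxᵀ)
      = -(B₂.cplx * Tw₂ * B₂.cplxᵀ) := by
    rw [← smul_add, hC2, smul_smul, Complex.I_mul_I, neg_one_smul]
  -- block 1 Lyapunov equation for Q₁ = P₁₁ + iJ
  have hQ1 : A₁.cplx * (P11.cplx + Complex.I • Jmat.cplx)
      + (P11.cplx + Complex.I • Jmat.cplx) * A₁.cplxᵀ
      + B₁.cplx * (Sw₁.cplx + Tw₁) * B₁.cplxᴴ = 0 := by
    rw [cplx_conjTranspose]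
    simp only [Matrix.mul_add, Matrix.add_mul, Matrix.mul_smul, Matrix.smul_mul]
    linear_combination (norm := module) hreal1 + hI1
  have hD1 : (B₁.cplx * (Sw₁.cplx + Tw₁) * B₁.cplxᴴ).PosSemidef :=
    hFw₁.mul_mul_conjTranspose_same B₁.cplx
  have hQ1psd : (P11.cplx + Complex.I • Jmat.cplx).PosSemidef :=
    lyap A₁ ht₁ hd₁ hD1 hQ1
  -- block 2: conjugation trick
  have hMconj : B₂.cplx * Tw₂ᵀ * B₂.cplxᵀ = -(B₂.cplx * Tw₂ * B₂.cplxᵀ) := by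
    have hTwt : Tw₂.map (starRingEnd ℂ) = Tw₂ᵀ := by
      ext i j
      simpa [Matrix.conjTranspose_apply, Matrix.transpose_apply, Matrix.map_apply]
        using congrFun (congrFun hTw₂.eq j) i
    have hmap : (B₂.cplx * Tw₂ * B₂.cplxᵀ).map (starRingEnd ℂ)
        = B₂.cplx * Tw₂ᵀ * B₂.cplxᵀ := by
      rw [Matrix.map_mul, Matrix.map_mul, hTwt]
      rw [show B₂.cplx.map (starRingEnd ℂ) = B₂.cplx from cplx_conj B₂]
      rw [show (B₂.cplxᵀ).map (starRingEnd ℂ) = B₂.cplxᵀ from by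
        rw [← cplx_transpose, cplx_conj]]
    have hM : B₂.cplx * Tw₂ * B₂.cplxᵀ
        = (-Complex.I) • (A₂ * Jmat + Jmat * A₂ᵀ).cplx := by
      rw [cplx_add, cplx_mul, cplx_mul, cplx_transpose, hC2, smul_smul]
      simp
    rw [← hmap, hM, map_conj_smul]
    rw [show (A₂ * Jmat + Jmat * A₂ᵀ).cplx.map (starRingEnd ℂ)
        = (A₂ * Jmat + Jmat * A₂ᵀ).cplx from cplx_conj _]
    simp
  have hNT : (B₂.cplx * (Sw₂.cplx + Tw₂) * B₂.cplxᴴ)ᵀ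
      = B₂.cplx * Sw₂.cplx * B₂.cplxᵀ - B₂.cplx * Tw₂ * B₂.cplxᵀ := by
    rw [cplx_conjTranspose, Matrix.transpose_mul, Matrix.transpose_mul,
      Matrix.transpose_transpose, Matrix.transpose_add]
    rw [show Sw₂.cplxᵀ = Sw₂.cplx from by rw [← cplx_transpose, hSw₂.eq]]
    rw [← Matrix.mul_assoc, Matrix.mul_add, Matrix.add_mul, hMconj]
    abel
  have hD2 : (B₂.cplx * Sw₂.cplx * B₂.cplxᵀ - B₂.cplx * Tw₂ * B₂.cplxᵀ).PosSemidef := by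
    rw [← hNT]
    exact (hFw₂.mul_mul_conjTranspose_same B₂.cplx).transpose
  have hQ2 : A₂.cplx * (P22.cplx - Complex.I • Jmat.cplx)
      + (P22.cplx - Complex.I • Jmat.cplx) * A₂.cplxᵀ
      + (B₂.cplx * Sw₂.cplx * B₂.cplxᵀ - B₂.cplx * Tw₂ * B₂.cplxᵀ) = 0 := by
    simp only [Matrix.mul_sub, Matrix.sub_mul, Matrix.mul_smul, Matrix.smul_mul]
    linear_combination (norm := module) hreal2 - hI2
  have hQ2psd : (P22.cplx - Complex.I • Jmat.cplx).PosSemidef :=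
    lyap A₂ ht₂ hd₂ hD2 hQ2
  -- assemble
  have hgoal : P.cplx + Complex.I • (fromBlocks Jmat 0 0 (-Jmat)).cplx
      = fromBlocks (P11.cplx + Complex.I • Jmat.cplx) 0 0
          (P22.cplx - Complex.I • Jmat.cplx) := by
    rw [hPb, h12, h21, cplx_fromBlocks, cplx_fromBlocks, cplx_zero, cplx_neg,
      fromBlocks_smul, fromBlocks_add]
    congr 1 <;> simp [sub_eq_add_neg]
  rw [hgoal]
  exact psd_fromBlocks hQ1psd hQ2psd
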